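/- Let f : ℝ^{n-1} → ℝ be Lipschitz with f(0) = 0 and ‖∇f‖_∞ ≤ η for some η ∈ (0, 1/15], and let G := graph(f) ∩ B₂ ⊂ ℝⁿ. Then for every δ ∈ (0,1/2) and every x ∈ (closure(B_{1+δ}) \ B₁) ∩ G, one has dist(x, (closure(B_{1+2δ}) \ B_{1+δ}) ∩ G) ≤ (3/2) δ. -/

import Mathlib

open Metric Set

/-- The graph of `f : ℝ^{n-1} → ℝ` inside `ℝⁿ = ℝ^{n-1} ×₂ ℝ` (with the Euclidean norm),
intersected with the ball `B₂`. -/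
noncomputable def graphInBall2 {m : ℕ} (f : EuclideanSpace ℝ (Fin m) → ℝ) :
    Set (WithLp 2 (EuclideanSpace ℝ (Fin m) × ℝ)) :=
  {p | ∃ y, p = (WithLp.equiv 2 (EuclideanSpace ℝ (Fin m) × ℝ)).symm (y, f y)} ∩
    ball (0 : WithLp 2 (EuclideanSpace ℝ (Fin m) × ℝ)) 2

private lemma norm_sq_pt {m : ℕ} (y : EuclideanSpace ℝ (Fin m)) (t : ℝ) :
    ‖(WithLp.equiv 2 (EuclideanSpace ℝ (Fin m) × ℝ)).symm (y, t)‖ ^ 2 = ‖y‖ ^ 2 + t ^ 2 := by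
  rw [WithLp.prod_norm_sq_eq_of_L2]
  simp [Real.norm_eq_abs, sq_abs]

private lemma aux_eta_sq (η : ℝ) (hη0 : 0 < η) (hη : η ≤ 1 / 15) : η ^ 2 ≤ 1 / 225 := by
  nlinarith

private lemma aux_ar (a b r : ℝ) (ha0 : 0 ≤ a) (hr0 : 0 ≤ r) (hab : r ^ 2 = a ^ 2 + b ^ 2) :
    a ≤ r := by
  nlinarith [sq_nonneg b]

private lemma aux_a2 (a b r η : ℝ) (hba : |b| ≤ η * a) (hab : r ^ 2 = a ^ 2 + b ^ 2) :
    r ^ 2 ≤ a ^ 2 * (1 + η ^ 2) := by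
  nlinarith [sq_abs b, sq_nonneg (η * a - |b|), abs_nonneg b]

private lemma aux_sb (s b η ε a : ℝ) (hsdev : |s - b| ≤ η * (ε * a)) (hba : |b| ≤ η * a)
    (hε0 : 0 ≤ ε) (hη0 : 0 ≤ η) (ha0 : 0 ≤ a) :
    b ^ 2 - η ^ 2 * (ε * a ^ 2) ≤ s * b := by
  have h2 : |s - b| * |b| ≤ (η * (ε * a)) * (η * a) :=
    mul_le_mul hsdev hba (abs_nonneg b) (by positivity)
  have h3 : -|(s - b) * b| ≤ (s - b) * b := neg_abs_le _
  rw [abs_mul] at h3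
  nlinarith [h2, h3]

private lemma aux_lowc (a b r η ε s n I : ℝ) (hab : r ^ 2 = a ^ 2 + b ^ 2)
    (hinner : I = (1 + ε) * a ^ 2 + s * b) (hcs : I ≤ n * r)
    (hsb : b ^ 2 - η ^ 2 * (ε * a ^ 2) ≤ s * b) :
    r ^ 2 + (ε * a ^ 2) * (1 - η ^ 2) ≤ n * r := by
  nlinarith [hcs, hinner, hsb]

private lemma aux_c (δ r a e c : ℝ) (hδ0 : 0 < δ) (hr : 0 < r) (ha0 : 0 ≤ a)
    (ha2 : r ^ 2 ≤ a ^ 2 * (1 + e)) (har : a ≤ r) (hc : c * (4 * r) = 5 * δ * a ^ 2) :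
    5 * δ * r ≤ 4 * c * (1 + e) ∧ 4 * c ≤ 5 * δ * r := by
  constructor
  · have hce : (c * (4 * r)) * (1 + e) = (5 * δ * a ^ 2) * (1 + e) := by rw [hc]
    have h1 : (5 * δ * r) * r ≤ (4 * c * (1 + e)) * r := by
      nlinarith [hce, mul_le_mul_of_nonneg_left ha2 (by positivity : (0:ℝ) ≤ 5 * δ)]
    exact le_of_mul_le_mul_right h1 hr
  · have h1 : (4 * c) * r ≤ (5 * δ * r) * r := by
      nlinarith [hc, mul_le_mul_of_nonneg_left (mul_self_le_mul_self ha0 har)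
        (by positivity : (0:ℝ) ≤ 5 * δ)]
    exact le_of_mul_le_mul_right h1 hr

private lemma key_ineq (δ r e c n : ℝ) (hδ0 : 0 < δ) (hr1 : 1 ≤ r) (he0 : 0 ≤ e)
    (he : e ≤ 1 / 225) (h2 : 5 * δ * r ≤ 4 * c * (1 + e)) (h3 : 4 * c ≤ 5 * δ * r)
    (hlow : r ^ 2 + c * (1 - e) ≤ n * r) : 1 + δ ≤ n := by
  have hrpos : (0 : ℝ) < r := lt_of_lt_of_le one_pos hr1
  have hdr : δ * r ≤ c * (1 - e) := by
    nlinarith [mul_le_mul_of_nonneg_right h3 he0,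
      mul_le_mul_of_nonneg_left he (by positivity : (0:ℝ) ≤ 5 * (δ * r))]
  have h4 : (1 + δ) * r ≤ n * r := by
    nlinarith [mul_le_mul_of_nonneg_left hr1 hrpos.le]
  exact le_of_mul_le_mul_right h4 hrpos

private lemma aux_nsq (u v η δ : ℝ) (hδ0 : 0 < δ) (hη0 : 0 ≤ η) (hη2 : η ^ 2 ≤ 1 / 225)
    (hu0 : 0 ≤ u) (hu : u ≤ 5 * δ / 4) (hv : |v| ≤ η * u) :
    u ^ 2 + v ^ 2 ≤ (3 / 2 * δ) ^ 2 := by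
  have hu2 : u ^ 2 ≤ (5 * δ / 4) ^ 2 := by nlinarith
  have hv2 : v ^ 2 ≤ η ^ 2 * u ^ 2 := by
    nlinarith [sq_abs v, abs_nonneg v, mul_self_le_mul_self (abs_nonneg v) hv]
  nlinarith [mul_le_mul_of_nonneg_right hη2 (sq_nonneg u), sq_nonneg δ, hu2]

private lemma aux_sqrt_le (n d : ℝ) (hn : 0 ≤ n) (hd : 0 ≤ d) (h : n ^ 2 ≤ d ^ 2) : n ≤ d := by
  nlinarith

set_option maxHeartbeats 1000000 in
/-- For a Lipschitz graph `G` with small slope `η ≤ 1/15` through the origin, every point of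
`G` in the annulus `closure(B_{1+δ}) \ B₁` is within distance `(3/2)δ` of
`(closure(B_{1+2δ}) \ B_{1+δ}) ∩ G`, for every `δ ∈ (0,1/2)`. -/
theorem graph_annulus_dist_bound {m : ℕ} (η : ℝ) (hη0 : 0 < η) (hη : η ≤ 1 / 15)
    (f : EuclideanSpace ℝ (Fin m) → ℝ)
    (hf : LipschitzWith (Real.toNNReal η) f) (hf0 : f 0 = 0) :
    ∀ δ : ℝ, 0 < δ → δ < 1 / 2 →
      ∀ x ∈ (closedBall (0 : WithLp 2 (EuclideanSpace ℝ (Fin m) × ℝ)) (1 + δ) \ ball 0 1) ∩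
          graphInBall2 f,
        Metric.infDist x
            ((closedBall (0 : WithLp 2 (EuclideanSpace ℝ (Fin m) × ℝ)) (1 + 2 * δ) \
                ball 0 (1 + δ)) ∩ graphInBall2 f)
          ≤ 3 / 2 * δ := by
  intro δ hδ0 hδ2 x hx
  obtain ⟨⟨hx1, hx2⟩, ⟨y, hxy⟩, _⟩ := hx
  have hdistf : ∀ u v : EuclideanSpace ℝ (Fin m), |f u - f v| ≤ η * ‖u - v‖ := by
    intro u v
    have := hf.dist_le_mul u v
    rwa [Real.coe_toNNReal η hη0.le, Real.dist_eq, dist_eq_norm] at this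
  set r := ‖x‖ with hr
  have hr1 : 1 ≤ r := by
    simp only [mem_ball, dist_zero_right, not_lt] at hx2
    exact hx2
  have hr2 : r ≤ 1 + δ := by
    simpa [dist_zero_right] using hx1
  set a := ‖y‖ with ha
  set b := f y with hb
  have hab : r ^ 2 = a ^ 2 + b ^ 2 := by
    rw [hr, hxy, norm_sq_pt]
  have hba : |b| ≤ η * a := by
    have := hdistf y 0
    simpa [hf0, hb, ha] using this
  have hη2 : η ^ 2 ≤ 1 / 225 := aux_eta_sq η hη0 hη
  have ha0 : 0 ≤ a := norm_nonneg _
  have hrpos : (0 : ℝ) < r := lt_of_lt_of_le one_pos hr1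
  have har : a ≤ r := aux_ar a b r ha0 hrpos.le hab
  have ha2 : r ^ 2 ≤ a ^ 2 * (1 + η ^ 2) := aux_a2 a b r η hba hab
  set ε := 5 * δ / (4 * r) with hε
  have hε0 : 0 < ε := by positivity
  have hεr : ε * r = 5 * δ / 4 := by rw [hε, div_mul_eq_mul_div, div_eq_div_iff (by positivity) (by norm_num)]; ring
  -- the curve along the graph
  set q : ℝ → WithLp 2 (EuclideanSpace ℝ (Fin m) × ℝ) := fun t =>
    (WithLp.equiv 2 (EuclideanSpace ℝ (Fin m) × ℝ)).symm (t • y, f (t • y)) with hq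
  have hqc : Continuous q := by
    apply (WithLp.prod_continuous_toLp _ _ _).comp
    exact (continuous_id.smul continuous_const).prodMk
      (hf.continuous.comp (continuous_id.smul continuous_const))
  have hq1 : q 1 = x := by rw [hq, hxy]; simp [hb]
  -- Lipschitz deviation along the curve
  have hfdev : ∀ t : ℝ, |f (t • y) - b| ≤ η * (|t - 1| * a) := by
    intro t
    have := hdistf (t • y) y
    have h2 : ‖t • y - y‖ = |t - 1| * a := by
      rw [ha, show t • y - y = (t - 1) • y by rw [sub_smul, one_smul], norm_smul,
        Real.norm_eq_abs]
    rw [hb]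
    rwa [h2] at this
  -- lower bound for the norm at parameter 1 + ε
  have key : 1 + δ ≤ ‖q (1 + ε)‖ := by
    set s := f ((1 + ε) • y) with hs
    have hinner : inner ℝ (q (1 + ε)) x = (1 + ε) * a ^ 2 + s * b := by
      rw [hq, hxy]
      simp only [WithLp.prod_inner_apply, WithLp.equiv_symm_apply, WithLp.ofLp_toLp]
      rw [real_inner_smul_left, real_inner_self_eq_norm_sq, RCLike.inner_apply,
        conj_trivial, mul_comm b]
    have hsdev : |s - b| ≤ η * (ε * a) := by
      have := hfdev (1 + ε)
      simpa [abs_of_pos hε0] using this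
    have hcs : inner ℝ (q (1 + ε)) x ≤ ‖q (1 + ε)‖ * r := real_inner_le_norm _ _
    have hsb : b ^ 2 - η ^ 2 * (ε * a ^ 2) ≤ s * b :=
      aux_sb s b η ε a hsdev hba hε0.le hη0.le ha0
    have hlow : r ^ 2 + (ε * a ^ 2) * (1 - η ^ 2) ≤ ‖q (1 + ε)‖ * r :=
      aux_lowc a b r η ε s ‖q (1 + ε)‖ (inner ℝ (q (1 + ε)) x) hab hinner hcs hsb
    have hcdef : (ε * a ^ 2) * (4 * r) = 5 * δ * a ^ 2 := by
      rw [hε]; field_simp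
    obtain ⟨hc2, hc3⟩ := aux_c δ r a (η ^ 2) (ε * a ^ 2) hδ0 hrpos ha0 ha2 har hcdef
    exact key_ineq δ r (η ^ 2) (ε * a ^ 2) _ hδ0 hr1 (sq_nonneg η) hη2 hc2 hc3 hlow
  -- intermediate value theorem
  have hmono : (1 : ℝ) ≤ 1 + ε := by linarith
  have hivt := intermediate_value_Icc hmono ((hqc.norm).continuousOn)
  have hmem : (1 + δ) ∈ Icc ‖q 1‖ ‖q (1 + ε)‖ := by
    constructor
    · rw [hq1]; exact hr2
    · exact key
  obtain ⟨t, ht, hgt⟩ := hivt hmem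
  -- the candidate point
  set x' := q t with hx'
  have hx'norm : ‖x'‖ = 1 + δ := hgt
  have ht1 : 1 ≤ t := ht.1
  have htε : t ≤ 1 + ε := ht.2
  have hdist : dist x x' ≤ 3 / 2 * δ := by
    rw [dist_eq_norm]
    have hsub : x - x' = (WithLp.equiv 2 (EuclideanSpace ℝ (Fin m) × ℝ)).symm
        (y - t • y, b - f (t • y)) := by
      rw [hxy, hx', hq]
      rfl
    have hnsq : ‖x - x'‖ ^ 2 = ‖y - t • y‖ ^ 2 + (b - f (t • y)) ^ 2 := by
      rw [hsub, norm_sq_pt]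
    have h1 : ‖y - t • y‖ = (t - 1) * a := by
      rw [ha, show y - t • y = -((t - 1) • y) by rw [sub_smul, one_smul, neg_sub],
        norm_neg, norm_smul, Real.norm_eq_abs,
        abs_of_nonneg (by linarith : (0:ℝ) ≤ t - 1)]
    have h2 : |b - f (t • y)| ≤ η * ((t - 1) * a) := by
      have := hfdev t
      rw [abs_sub_comm]
      rwa [abs_of_nonneg (by linarith : (0:ℝ) ≤ t - 1)] at this
    have ht1ε : t - 1 ≤ ε := by linarith
    have hta : (t - 1) * a ≤ 5 * δ / 4 := by
      calc (t - 1) * a ≤ ε * a := mul_le_mul_of_nonneg_right ht1ε ha0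
        _ ≤ ε * r := mul_le_mul_of_nonneg_left har hε0.le
        _ = 5 * δ / 4 := hεr
    have hta0 : 0 ≤ (t - 1) * a := mul_nonneg (by linarith) ha0
    have hnsq2 : ‖x - x'‖ ^ 2 ≤ (3 / 2 * δ) ^ 2 := by
      rw [hnsq, h1]
      exact aux_nsq ((t - 1) * a) (b - f (t • y)) η δ hδ0 hη0.le hη2 hta0 hta h2
    exact aux_sqrt_le _ _ (norm_nonneg _) (by positivity) hnsq2
  have hx'mem : x' ∈ (closedBall (0 : WithLp 2 (EuclideanSpace ℝ (Fin m) × ℝ)) (1 + 2 * δ) \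
      ball 0 (1 + δ)) ∩ graphInBall2 f := by
    refine ⟨⟨?_, ?_⟩, ⟨t • y, rfl⟩, ?_⟩
    · rw [mem_closedBall, dist_zero_right, hx'norm]; linarith
    · rw [mem_ball, dist_zero_right, hx'norm]; exact lt_irrefl _
    · rw [mem_ball, dist_zero_right, hx'norm]; linarith
  calc Metric.infDist x _ ≤ dist x x' := infDist_le_dist_of_mem hx'mem
    _ ≤ 3 / 2 * δ := hdist
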